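/- In any algebra (S,*,') satisfying the three axioms, the identity x''' * x'' = x''' * x'''' holds for all x in S. -/
import Mathlib


theorem stmt (S : Type*) (m : S → S → S) (i : S → S)
    (E1 : ∀ x, m (m x (i x)) x = x)
    (E2 : ∀ x y, m (m x (i x)) (m (i y) y) = m (m (i y) y) (m x (i x)))
    (E3 : ∀ x y z, m (m x y) z = m x (m y (i (i z)))) :
    ∀ x, m (i (i (i x))) (i (i x)) = m (i (i (i x))) (i (i (i (i x)))) := by
  intro x
  have L1 : ∀ y, m y (m (i y) (i (i y))) = y :=
    fun y => (E3 y (i y) y).symm.trans (E1 y)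
  have h : m (i (i (i x))) (i (i (i (i x)))) =
      m (m (i (i (i x))) (m (i (i (i (i x)))) (i (i (i (i (i x))))))) (i (i x)) := by
    rw [E3, E1]
  rw [h, L1]
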